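/- Let q with 0 < |q| < 1, let x_1, ..., x_k be nonzero complex numbers such that x_i/x_j is never an integer power of q for i ≠ j, and let d_1, ..., d_k be nonnegative integers. Set W(d) = ∏_{1 ≤ i < j ≤ k} (x_j − x_i)^{−1} (−x_j/x_i)^{d_j − d_i} q^{(d_j − d_i)(d_j − d_i − 1)/2 − d_i}. Then ∏_{1 ≤ i < j ≤ k} (x_j q^{d_j} − x_i q^{d_i}) = W(d)^{−1} · ∏_{b=1}^{k} ∏_{c=1}^{k} ((x_b/x_c) q; q)_∞ / ((x_b q^{d_b}/(x_c q^{d_c})) q; q)_∞. -/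

import Mathlib

open Finset Complex


lemma logSummable {q : ℂ} (hq : ‖q‖ < 1) (z : ℂ) :
    Summable fun m : ℕ => Complex.log (1 - z * q * q ^ m) := by
  apply Summable.of_norm_bounded_eventually_nat (g := fun m => 3/2 * (‖z*q‖ * ‖q‖^m))
  · exact ((summable_geometric_of_lt_one (norm_nonneg q) hq).mul_left _).mul_left _
  · have h0 : Filter.Tendsto (fun m : ℕ => ‖z*q‖ * ‖q‖^m) Filter.atTop (nhds 0) := by
      simpa using (tendsto_pow_atTop_nhds_zero_of_lt_one (norm_nonneg q) hq).const_mul ‖z*q‖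
    have h1 : ∀ᶠ m : ℕ in Filter.atTop, ‖z*q‖ * ‖q‖^m ≤ 1/2 :=
      h0.eventually (eventually_le_nhds (by norm_num))
    filter_upwards [h1] with m hm
    have hnorm : ‖-(z * q * q ^ m)‖ = ‖z*q‖ * ‖q‖^m := by
      rw [norm_neg, norm_mul, norm_pow]
    have := Complex.norm_log_one_add_half_le_self (z := -(z * q * q ^ m))
      (by rw [hnorm]; exact hm)
    rw [show (1 : ℂ) + -(z * q * q ^ m) = 1 - z * q * q ^ m by ring] at this
    calc ‖Complex.log (1 - z * q * q ^ m)‖ ≤ 3/2 * ‖-(z * q * q ^ m)‖ := this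
      _ = 3/2 * (‖z*q‖ * ‖q‖^m) := by rw [hnorm]

lemma G_eq_exp {q : ℂ} (hq : ‖q‖ < 1) (z : ℂ) (hz : ∀ m : ℕ, 1 - z * q * q ^ m ≠ 0) :
    (∏' m : ℕ, (1 - z * q * q ^ m)) =
      Complex.exp (∑' m : ℕ, Complex.log (1 - z * q * q ^ m)) := by
  have := Complex.cexp_tsum_eq_tprod (f := fun m : ℕ => 1 - z * q * q ^ m)
    (fun m => hz m) (logSummable hq z)
  exact this.symm

lemma G_ne_zero {q : ℂ} (hq : ‖q‖ < 1) (z : ℂ) (hz : ∀ m : ℕ, 1 - z * q * q ^ m ≠ 0) :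
    (∏' m : ℕ, (1 - z * q * q ^ m)) ≠ 0 := by
  rw [G_eq_exp hq z hz]; exact Complex.exp_ne_zero _

lemma G_shift {q : ℂ} (hq : ‖q‖ < 1) (z : ℂ) (hz : ∀ m : ℕ, 1 - z * q * q ^ m ≠ 0)
    (n : ℕ) :
    (∏' m : ℕ, (1 - z * q * q ^ m)) =
      (∏ m ∈ Finset.range n, (1 - z * q * q ^ m)) *
        ∏' m : ℕ, (1 - z * q ^ n * q * q ^ m) := by
  have key : ∀ m : ℕ, 1 - z * q ^ n * q * q ^ m = 1 - z * q * q ^ (m + n) := by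
    intro m; ring
  have hz' : ∀ m : ℕ, 1 - z * q ^ n * q * q ^ m ≠ 0 := by
    intro m; rw [key m]; exact hz (m + n)
  rw [G_eq_exp hq z hz, G_eq_exp hq _ hz']
  have hsum := logSummable hq z
  rw [← Summable.sum_add_tsum_nat_add n hsum, Complex.exp_add, Complex.exp_sum]
  congr 1
  · exact Finset.prod_congr rfl fun m _ => Complex.exp_log (hz m)
  · congr 1
    exact tsum_congr fun m => by rw [key m]



-- convert between  q*q^m  and  q^(m+1) forms
lemma Phi_eq (q z : ℂ) (n : ℕ) :
    ∏ m ∈ range n, (1 - z * q * q ^ m) = ∏ m ∈ range n, (1 - z * q ^ (m + 1)) :=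
  Finset.prod_congr rfl fun m _ => by rw [pow_succ]; ring

lemma F1gen (q z : ℂ) (n m : ℕ) :
    (∏ t ∈ range n, (1 - z * q ^ (t + 1))) * (∏ j ∈ range m, (1 - z * q ^ (n + j))) *
        (1 - z * q ^ 0) =
      (1 - z * q ^ n) * ∏ t ∈ range (n + m), (1 - z * q ^ t) := by
  have h1 : (∏ t ∈ range n, (1 - z * q ^ (t + 1))) * (1 - z * q ^ 0) =
      ∏ t ∈ range (n + 1), (1 - z * q ^ t) := (Finset.prod_range_succ' (fun t => 1 - z * q ^ t) n).symm
  have h2 : ∏ t ∈ range (n + m), (1 - z * q ^ t) =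
      (∏ t ∈ range n, (1 - z * q ^ t)) * ∏ j ∈ range m, (1 - z * q ^ (n + j)) :=
    Finset.prod_range_add _ n m
  have h3 : ∏ t ∈ range (n + 1), (1 - z * q ^ t) =
      (∏ t ∈ range n, (1 - z * q ^ t)) * (1 - z * q ^ n) := Finset.prod_range_succ _ n
  calc (∏ t ∈ range n, (1 - z * q ^ (t + 1))) * (∏ j ∈ range m, (1 - z * q ^ (n + j))) *
        (1 - z * q ^ 0)
      = ((∏ t ∈ range n, (1 - z * q ^ (t + 1))) * (1 - z * q ^ 0)) *
          ∏ j ∈ range m, (1 - z * q ^ (n + j)) := by ring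
    _ = ((∏ t ∈ range n, (1 - z * q ^ t)) * (1 - z * q ^ n)) *
          ∏ j ∈ range m, (1 - z * q ^ (n + j)) := by rw [h1, h3]
    _ = (1 - z * q ^ n) * ∏ t ∈ range (n + m), (1 - z * q ^ t) := by rw [h2]; ring

lemma F3gen (q z z' : ℂ) (n m : ℕ) (hzz : z' * (z * q ^ (n + m)) = 1) :
    (∏ t ∈ range n, (1 - z' * q ^ (t + 1))) * (z * q ^ (n + m)) ^ n =
      (∏ t ∈ range n, -(q ^ (t + 1))) * ∏ j ∈ range n, (1 - z * q ^ (m + j)) := by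
  have hrefl : ∏ t ∈ range n, (1 - z * q ^ (m + (n - 1 - t))) =
      ∏ j ∈ range n, (1 - z * q ^ (m + j)) :=
    Finset.prod_range_reflect (fun j => 1 - z * q ^ (m + j)) n
  rw [← hrefl, ← Finset.prod_mul_distrib]
  have hc : (z * q ^ (n + m)) ^ n = ∏ _t ∈ range n, (z * q ^ (n + m)) := by
    rw [Finset.prod_const, Finset.card_range]
  rw [hc, ← Finset.prod_mul_distrib]
  refine Finset.prod_congr rfl fun t ht => ?_
  have ht' : t < n := Finset.mem_range.mp ht
  have hpow : (q : ℂ) ^ (m + (n - 1 - t)) * q ^ (t + 1) = q ^ (n + m) := by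
    rw [← pow_add]; congr 1; omega
  linear_combination (-(q ^ (t + 1))) * hzz + (-z) * hpow



-- product of -(q^(t+1)) over range n
lemma Nprod (q : ℂ) (n t' : ℕ) (h : (∑ t ∈ range n, (t + 1)) = t') :
    ∏ t ∈ range n, -(q ^ (t + 1)) = (-1) ^ n * q ^ t' := by
  calc ∏ t ∈ range n, -(q ^ (t + 1)) = ∏ t ∈ range n, (-1) * q ^ (t + 1) :=
        Finset.prod_congr rfl fun t _ => by ring
    _ = (∏ _t ∈ range n, (-1 : ℂ)) * ∏ t ∈ range n, q ^ (t + 1) := Finset.prod_mul_distrib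
    _ = (-1) ^ n * q ^ (∑ t ∈ range n, (t + 1)) := by
        rw [Finset.prod_const, Finset.card_range, Finset.prod_pow_eq_pow_sum]
    _ = (-1) ^ n * q ^ t' := by rw [h]

lemma gauss (n : ℕ) : (∑ t ∈ range n, (t + 1)) * 2 = (n + 1) * n := by
  have h2 : ∑ i ∈ range (n + 1), i = (∑ i ∈ range n, (i + 1)) + 0 :=
    Finset.sum_range_succ' (fun i => i) n
  have h1 := Finset.sum_range_id_mul_two (n + 1)
  rw [h2] at h1
  simpa using h1

-- the exponent identity
lemma key5 (q : ℂ) (hq0 : q ≠ 0) (di dj t1 t2 : ℕ)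
    (h1 : t1 * 2 = (di + 1) * di) (h2 : t2 * 2 = (dj + 1) * dj) :
    (q : ℂ) ^ t1 * q ^ (dj * dj) =
      q ^ di * q ^ t2 * q ^ (di * dj) *
        q ^ (((dj : ℤ) - di) * ((dj : ℤ) - di - 1) / 2 - (di : ℤ)) := by
  set e : ℤ := (dj : ℤ) - di with he
  have hev : Even (e * (e - 1)) := Int.even_mul_pred_self e
  obtain ⟨c, hc⟩ := hev
  have hc2 : e * (e - 1) / 2 = c := by omega
  have h1z : (t1 : ℤ) * 2 = ((di : ℤ) + 1) * di := by exact_mod_cast h1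
  have h2z : (t2 : ℤ) * 2 = ((dj : ℤ) + 1) * dj := by exact_mod_cast h2
  have hexp : ((t1 + dj * dj : ℕ) : ℤ) = ((di + t2 + di * dj : ℕ) : ℤ) + (e * (e - 1) / 2 - di) := by
    rw [hc2]
    push_cast
    have h2c : (2:ℤ) * ((t1:ℤ) + dj*dj) = 2 * ((di:ℤ) + t2 + di*dj + (c - di)) := by
      linear_combination h1z - h2z + hc
    linarith
  calc (q : ℂ) ^ t1 * q ^ (dj * dj) = q ^ (t1 + dj * dj) := (pow_add q t1 (dj * dj)).symm
    _ = q ^ ((t1 + dj * dj : ℕ) : ℤ) := (zpow_natCast q _).symm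
    _ = q ^ (((di + t2 + di * dj : ℕ) : ℤ) + (e * (e - 1) / 2 - (di : ℤ))) := by rw [hexp]
    _ = q ^ ((di + t2 + di * dj : ℕ) : ℤ) * q ^ (e * (e - 1) / 2 - (di : ℤ)) := zpow_add₀ hq0 _ _
    _ = q ^ di * q ^ t2 * q ^ (di * dj) * q ^ (e * (e - 1) / 2 - (di : ℤ)) := by
        rw [zpow_natCast, pow_add, pow_add]




lemma F5lem (q a b : ℂ) (hq0 : q ≠ 0) (ha : a ≠ 0) (hb : b ≠ 0) (hba : b - a ≠ 0)
    (di dj : ℕ) :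
    (1 - b / (a * q ^ di) * q ^ dj) * (∏ t ∈ range di, -(q ^ (t + 1))) *
        (b / (a * q ^ di) * q ^ (di + dj)) ^ dj =
      (1 - b / (a * q ^ di) * q ^ di) * (∏ t ∈ range dj, -(q ^ (t + 1))) *
          (b / (a * q ^ di) * q ^ (di + dj)) ^ di *
        ((b - a)⁻¹ * (-(b / a)) ^ ((dj : ℤ) - (di : ℤ)) *
          q ^ (((dj : ℤ) - di) * ((dj : ℤ) - di - 1) / 2 - (di : ℤ))) *
        (b * q ^ dj - a * q ^ di) := by
  have hqd : ∀ n : ℕ, (q : ℂ) ^ n ≠ 0 := fun n => pow_ne_zero n hq0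
  have hr0 : (b / a : ℂ) ≠ 0 := div_ne_zero hb ha
  have hzqs : b / (a * q ^ di) * q ^ (di + dj) = b / a * q ^ dj := by
    field_simp [pow_add]; ring
  have hN1 := Nprod q di _ rfl
  have hN2 := Nprod q dj _ rfl
  set t1 := ∑ t ∈ range di, (t + 1) with ht1
  set t2 := ∑ t ∈ range dj, (t + 1) with ht2
  have hK := key5 q hq0 di dj t1 t2 (gauss di) (gauss dj)
  have hnp : ∀ n : ℕ, (-(b / a)) ^ n = (-1 : ℂ) ^ n * (b / a) ^ n := fun n => neg_pow _ n
  have hrho : (-(b / a)) ^ ((dj : ℤ) - (di : ℤ)) =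
      ((-1) ^ dj * (b / a) ^ dj) * (((-1) ^ di * (b / a) ^ di))⁻¹ := by
    rw [zpow_sub₀ (neg_ne_zero.mpr hr0), zpow_natCast, zpow_natCast, hnp di, hnp dj,
      div_eq_mul_inv]
  have sdi : ((-1 : ℂ) ^ di) * ((-1) ^ di) = 1 := by
    rw [← pow_add, ← two_mul, pow_mul]; norm_num
  have sdj : ((-1 : ℂ) ^ dj) * ((-1) ^ dj) = 1 := by
    rw [← pow_add, ← two_mul, pow_mul]; norm_num
  have hT : (1 - b / (a * q ^ di) * q ^ dj) * (a * q ^ di) = -(b * q ^ dj - a * q ^ di) := by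
    field_simp
    ring
  have hAdi : (1 - b / (a * q ^ di) * q ^ di) * a = a - b := by
    field_simp
  have hbm : (a - b) * ((b - a)⁻¹) = -1 := by
    rw [show a - b = -(b - a) by ring, neg_mul, mul_inv_cancel₀ hba]
  have hinv : (((-1 : ℂ) ^ di * (b / a) ^ di)) * (((-1 : ℂ) ^ di * (b / a) ^ di))⁻¹ = 1 :=
    mul_inv_cancel₀ (mul_ne_zero (pow_ne_zero _ (by norm_num)) (pow_ne_zero _ hr0))
  have hinv2 : (b / a) ^ di * (((-1 : ℂ) ^ di * (b / a) ^ di))⁻¹ = (-1) ^ di := by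
    linear_combination ((-1 : ℂ) ^ di) * hinv -
      ((b / a) ^ di * (((-1 : ℂ) ^ di * (b / a) ^ di))⁻¹) * sdi
  rw [hzqs, hN1, hN2, hrho]
  apply mul_right_cancel₀ (mul_ne_zero (pow_ne_zero 2 ha) (hqd di))
  linear_combination
    (a * ((-1 : ℂ) ^ di * q ^ t1) * (b / a * q ^ dj) ^ dj) * hT
    - (a * q ^ di * ((-1 : ℂ) ^ dj * q ^ t2) * (b / a * q ^ dj) ^ di * (b - a)⁻¹ *
        ((-1 : ℂ) ^ dj * (b / a) ^ dj * (((-1 : ℂ) ^ di * (b / a) ^ di))⁻¹) *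
        q ^ (((dj : ℤ) - di) * ((dj : ℤ) - di - 1) / 2 - (di : ℤ)) *
        (b * q ^ dj - a * q ^ di)) * hAdi
    - (a * q ^ di * ((-1 : ℂ) ^ dj * q ^ t2) * (b / a * q ^ dj) ^ di *
        ((-1 : ℂ) ^ dj * (b / a) ^ dj * (((-1 : ℂ) ^ di * (b / a) ^ di))⁻¹) *
        q ^ (((dj : ℤ) - di) * ((dj : ℤ) - di - 1) / 2 - (di : ℤ)) *
        (b * q ^ dj - a * q ^ di)) * hbm
    - (a * (b * q ^ dj - a * q ^ di)) *
      ( ((-1 : ℂ) ^ di * (b / a) ^ dj) * hK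
        - (q ^ di * q ^ t2 * q ^ (di * dj) *
            q ^ (((dj : ℤ) - di) * ((dj : ℤ) - di - 1) / 2 - (di : ℤ)) * (b / a) ^ dj) * hinv2
        - ((q : ℂ) ^ di * q ^ t2 * (b / a) ^ di * q ^ (di * dj) * (b / a) ^ dj *
            (((-1 : ℂ) ^ di * (b / a) ^ di))⁻¹ *
            q ^ (((dj : ℤ) - di) * ((dj : ℤ) - di - 1) / 2 - (di : ℤ))) * sdj )




lemma Keylem (q a b : ℂ) (hq0 : q ≠ 0) (ha : a ≠ 0) (hb : b ≠ 0) (hba : b - a ≠ 0)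
    (di dj : ℕ) (hA0 : 1 - b / (a * q ^ di) * q ^ 0 ≠ 0) :
    (∏ m ∈ range dj, (1 - b / (a * q ^ di) * q * q ^ m)) *
        (∏ m ∈ range di, (1 - a / (b * q ^ dj) * q * q ^ m)) =
      (∏ m ∈ range di, (1 - b / (a * q ^ di) * q * q ^ m)) *
        (∏ m ∈ range dj, (1 - a / (b * q ^ dj) * q * q ^ m)) *
        ((b - a)⁻¹ * (-(b / a)) ^ ((dj : ℤ) - (di : ℤ)) *
          q ^ (((dj : ℤ) - di) * ((dj : ℤ) - di - 1) / 2 - (di : ℤ))) *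
        (b * q ^ dj - a * q ^ di) := by
  have hqd : ∀ n : ℕ, (q : ℂ) ^ n ≠ 0 := fun n => pow_ne_zero n hq0
  set z : ℂ := b / (a * q ^ di) with hzdef
  set z' : ℂ := a / (b * q ^ dj) with hz'def
  have hz0 : z ≠ 0 := div_ne_zero hb (mul_ne_zero ha (hqd di))
  have hzz : z' * (z * q ^ (di + dj)) = 1 := by
    rw [hzdef, hz'def]; field_simp [pow_add]; ring
  have hzz' : z' * (z * q ^ (dj + di)) = 1 := by rw [add_comm dj di]; exact hzz
  have hcomm : dj + di = di + dj := add_comm dj di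
  have F3 := F3gen q z z' di dj hzz
  have F4 := F3gen q z z' dj di hzz'
  rw [hcomm] at F4
  have F1 := F1gen q z di dj
  have F2 := F1gen q z dj di
  rw [hcomm] at F2
  have F5 := F5lem q a b hq0 ha hb hba di dj
  rw [Phi_eq q z dj, Phi_eq q z' di, Phi_eq q z di, Phi_eq q z' dj]
  apply mul_right_cancel₀ (a := _) (b := (z * q ^ (di + dj)) ^ di *
    ((z * q ^ (di + dj)) ^ dj * (1 - z * q ^ 0)))
    (mul_ne_zero (pow_ne_zero _ (mul_ne_zero hz0 (hqd _)))
      (mul_ne_zero (pow_ne_zero _ (mul_ne_zero hz0 (hqd _))) hA0))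
  linear_combination
    ((∏ t ∈ range dj, (1 - z * q ^ (t + 1))) * (1 - z * q ^ 0) *
      (z * q ^ (di + dj)) ^ dj) * F3
    + ((∏ t ∈ range di, -(q ^ (t + 1))) * (z * q ^ (di + dj)) ^ dj) * F2
    + (∏ t ∈ range (di + dj), (1 - z * q ^ t)) * F5
    - ((∏ t ∈ range di, (1 - z * q ^ (t + 1))) * (1 - z * q ^ 0) *
        ((b - a)⁻¹ * (-(b / a)) ^ ((dj : ℤ) - (di : ℤ)) *
          q ^ (((dj : ℤ) - di) * ((dj : ℤ) - di - 1) / 2 - (di : ℤ))) *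
        (b * q ^ dj - a * q ^ di) * (z * q ^ (di + dj)) ^ di) * F4
    - ((∏ t ∈ range dj, -(q ^ (t + 1))) *
        ((b - a)⁻¹ * (-(b / a)) ^ ((dj : ℤ) - (di : ℤ)) *
          q ^ (((dj : ℤ) - di) * ((dj : ℤ) - di - 1) / 2 - (di : ℤ))) *
        (b * q ^ dj - a * q ^ di) * (z * q ^ (di + dj)) ^ di) * F1




lemma pairlem (q : ℂ) (hq0 : q ≠ 0) (hq : ‖q‖ < 1) (a b : ℂ) (ha : a ≠ 0) (hb : b ≠ 0)
    (hba : ∀ m : ℤ, b / a ≠ q ^ m) (hab : ∀ m : ℤ, a / b ≠ q ^ m) (di dj : ℕ) :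
    ((∏' m : ℕ, (1 - a / b * q * q ^ m)) /
        (∏' m : ℕ, (1 - a * q ^ di / (b * q ^ dj) * q * q ^ m))) *
      ((∏' m : ℕ, (1 - b / a * q * q ^ m)) /
        (∏' m : ℕ, (1 - b * q ^ dj / (a * q ^ di) * q * q ^ m))) =
      ((b - a)⁻¹ * (-(b / a)) ^ ((dj : ℤ) - (di : ℤ)) *
        q ^ (((dj : ℤ) - di) * ((dj : ℤ) - di - 1) / 2 - (di : ℤ))) *
      (b * q ^ dj - a * q ^ di) := by
  have hqd : ∀ n : ℕ, (q : ℂ) ^ n ≠ 0 := fun n => pow_ne_zero n hq0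
  have hba0 : b - a ≠ 0 := by
    intro h
    exact hba 0 (by rw [zpow_zero, div_eq_one_iff_eq ha]; exact sub_eq_zero.mp h)
  set z : ℂ := b / (a * q ^ di) with hzdef
  set z' : ℂ := a / (b * q ^ dj) with hz'def
  -- z * q^t ≠ 1
  have hz1 : ∀ t : ℕ, z * q ^ t ≠ 1 := by
    intro t h
    apply hba ((di : ℤ) - t)
    rw [zpow_sub₀ hq0, zpow_natCast, zpow_natCast, div_eq_div_iff ha (hqd t)]
    rw [hzdef] at h
    field_simp at h
    linear_combination h
  have hz'1 : ∀ t : ℕ, z' * q ^ t ≠ 1 := by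
    intro t h
    apply hab ((dj : ℤ) - t)
    rw [zpow_sub₀ hq0, zpow_natCast, zpow_natCast, div_eq_div_iff hb (hqd t)]
    rw [hz'def] at h
    field_simp at h
    linear_combination h
  have hA : ∀ m : ℕ, 1 - z * q * q ^ m ≠ 0 := by
    intro m h
    apply hz1 (m + 1)
    rw [pow_succ]
    rw [sub_eq_zero] at h
    linear_combination -h
  have hA' : ∀ m : ℕ, 1 - z' * q * q ^ m ≠ 0 := by
    intro m h
    apply hz'1 (m + 1)
    rw [pow_succ]
    rw [sub_eq_zero] at h
    linear_combination -h
  have hGz : (∏' m : ℕ, (1 - z * q * q ^ m)) ≠ 0 := G_ne_zero hq z hA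
  have hGz' : (∏' m : ℕ, (1 - z' * q * q ^ m)) ≠ 0 := G_ne_zero hq z' hA'
  have S1 := G_shift hq z' hA' dj
  have S2 := G_shift hq z' hA' di
  have S3 := G_shift hq z hA di
  have S4 := G_shift hq z hA dj
  have hΨdj : (∏ m ∈ range dj, (1 - z' * q * q ^ m)) ≠ 0 :=
    Finset.prod_ne_zero_iff.mpr fun m _ => hA' m
  have hΨdi : (∏ m ∈ range di, (1 - z' * q * q ^ m)) ≠ 0 :=
    Finset.prod_ne_zero_iff.mpr fun m _ => hA' m
  have hΦdi : (∏ m ∈ range di, (1 - z * q * q ^ m)) ≠ 0 :=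
    Finset.prod_ne_zero_iff.mpr fun m _ => hA m
  have hΦdj : (∏ m ∈ range dj, (1 - z * q * q ^ m)) ≠ 0 :=
    Finset.prod_ne_zero_iff.mpr fun m _ => hA m
  have hTz'di : (∏' m : ℕ, (1 - z' * q ^ di * q * q ^ m)) ≠ 0 := by
    intro h0; exact hGz' (by rw [S2, h0, mul_zero])
  have hTzdj : (∏' m : ℕ, (1 - z * q ^ dj * q * q ^ m)) ≠ 0 := by
    intro h0; exact hGz (by rw [S4, h0, mul_zero])
  -- rewrite the four tprod arguments
  have E1 : (∏' m : ℕ, (1 - a / b * q * q ^ m)) =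
      ∏' m : ℕ, (1 - z' * q ^ dj * q * q ^ m) :=
    tprod_congr fun m => by rw [hz'def]; field_simp; try ring
  have E2 : (∏' m : ℕ, (1 - a * q ^ di / (b * q ^ dj) * q * q ^ m)) =
      ∏' m : ℕ, (1 - z' * q ^ di * q * q ^ m) :=
    tprod_congr fun m => by rw [hz'def]; field_simp; try ring
  have E3 : (∏' m : ℕ, (1 - b / a * q * q ^ m)) =
      ∏' m : ℕ, (1 - z * q ^ di * q * q ^ m) :=
    tprod_congr fun m => by rw [hzdef]; field_simp; try ring
  have E4 : (∏' m : ℕ, (1 - b * q ^ dj / (a * q ^ di) * q * q ^ m)) =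
      ∏' m : ℕ, (1 - z * q ^ dj * q * q ^ m) :=
    tprod_congr fun m => by rw [hzdef]; field_simp; try ring
  rw [E1, E2, E3, E4]
  have hA0 : 1 - b / (a * q ^ di) * q ^ 0 ≠ 0 := by
    rw [pow_zero, mul_one, sub_ne_zero]
    intro h
    exact hz1 0 (by rw [pow_zero, mul_one]; exact h.symm)
  have Key := Keylem q a b hq0 ha hb hba0 di dj hA0
  rw [div_mul_div_comm, div_eq_iff (mul_ne_zero hTz'di hTzdj)]
  apply mul_right_cancel₀ (a := _) (b := (∏ m ∈ range dj, (1 - z' * q * q ^ m)) *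
    (∏ m ∈ range di, (1 - z * q * q ^ m))) (mul_ne_zero hΨdj hΦdi)
  linear_combination
    (-((∏' m : ℕ, (1 - z * q ^ di * q * q ^ m)) *
        (∏ m ∈ range di, (1 - z * q * q ^ m)))) * S1
    - (∏' m : ℕ, (1 - z' * q * q ^ m)) * S3
    + ((∏ m ∈ range dj, (1 - z * q * q ^ m)) *
        (∏' m : ℕ, (1 - z * q ^ dj * q * q ^ m))) * S2
    + (∏' m : ℕ, (1 - z' * q * q ^ m)) * S4
    + ((∏' m : ℕ, (1 - z' * q ^ di * q * q ^ m)) *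
        (∏' m : ℕ, (1 - z * q ^ dj * q * q ^ m))) * Key





/-- Lemma 3.4 (q-Pochhammer/Vandermonde identity):
`∏_{i<j}(x_j q^{d_j} − x_i q^{d_i}) = W(d)⁻¹ ∏_{b,c} (x_b/x_c·q;q)_∞ / (x_b q^{d_b}/(x_c q^{d_c})·q;q)_∞`. -/
theorem stmt10 (k : ℕ) (q : ℂ) (hq0 : q ≠ 0) (hq : ‖q‖ < 1) (x : Fin k → ℂ)
    (hx : ∀ i, x i ≠ 0) (hrat : ∀ i j, i ≠ j → ∀ m : ℤ, x i / x j ≠ q ^ m)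
    (d : Fin k → ℕ) :
    ∏ p ∈ Finset.univ.filter (fun p : Fin k × Fin k => p.1 < p.2),
        (x p.2 * q ^ d p.2 - x p.1 * q ^ d p.1) =
      (∏ p ∈ Finset.univ.filter (fun p : Fin k × Fin k => p.1 < p.2),
          ((x p.2 - x p.1)⁻¹ * (-(x p.2 / x p.1)) ^ ((d p.2 : ℤ) - (d p.1 : ℤ)) *
            q ^ (((d p.2 : ℤ) - d p.1) * ((d p.2 : ℤ) - d p.1 - 1) / 2 - (d p.1 : ℤ))))⁻¹ *
        ∏ b : Fin k, ∏ c : Fin k,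
          (∏' m : ℕ, (1 - (x b / x c) * q * q ^ m)) /
            (∏' m : ℕ, (1 - (x b * q ^ d b / (x c * q ^ d c)) * q * q ^ m)) := by
  classical
  have hxne : ∀ (i j : Fin k), i ≠ j → x j - x i ≠ 0 := by
    intro i j hij h
    exact hrat j i (Ne.symm hij) 0
      (by rw [zpow_zero, div_eq_one_iff_eq (hx i)]; exact sub_eq_zero.mp h)
  -- the W-product is nonzero
  have hWne : ∀ p ∈ Finset.univ.filter (fun p : Fin k × Fin k => p.1 < p.2),
      ((x p.2 - x p.1)⁻¹ * (-(x p.2 / x p.1)) ^ ((d p.2 : ℤ) - (d p.1 : ℤ)) *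
        q ^ (((d p.2 : ℤ) - d p.1) * ((d p.2 : ℤ) - d p.1 - 1) / 2 - (d p.1 : ℤ))) ≠ 0 := by
    intro p hp
    have hne : p.1 ≠ p.2 := ne_of_lt (Finset.mem_filter.mp hp).2
    exact mul_ne_zero (mul_ne_zero (inv_ne_zero (hxne p.1 p.2 hne))
      (zpow_ne_zero _ (neg_ne_zero.mpr (div_ne_zero (hx _) (hx _)))))
      (zpow_ne_zero _ hq0)
  have hWprod : (∏ p ∈ Finset.univ.filter (fun p : Fin k × Fin k => p.1 < p.2),
      ((x p.2 - x p.1)⁻¹ * (-(x p.2 / x p.1)) ^ ((d p.2 : ℤ) - (d p.1 : ℤ)) *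
        q ^ (((d p.2 : ℤ) - d p.1) * ((d p.2 : ℤ) - d p.1 - 1) / 2 - (d p.1 : ℤ)))) ≠ 0 :=
    Finset.prod_ne_zero_iff.mpr hWne
  suffices h : (∏ b : Fin k, ∏ c : Fin k,
      (∏' m : ℕ, (1 - (x b / x c) * q * q ^ m)) /
        (∏' m : ℕ, (1 - (x b * q ^ d b / (x c * q ^ d c)) * q * q ^ m))) =
      ∏ p ∈ Finset.univ.filter (fun p : Fin k × Fin k => p.1 < p.2),
        (((x p.2 - x p.1)⁻¹ * (-(x p.2 / x p.1)) ^ ((d p.2 : ℤ) - (d p.1 : ℤ)) *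
            q ^ (((d p.2 : ℤ) - d p.1) * ((d p.2 : ℤ) - d p.1 - 1) / 2 - (d p.1 : ℤ))) *
          (x p.2 * q ^ d p.2 - x p.1 * q ^ d p.1)) by
    have hsplit : ∏ p ∈ Finset.univ.filter (fun p : Fin k × Fin k => p.1 < p.2),
        (((x p.2 - x p.1)⁻¹ * (-(x p.2 / x p.1)) ^ ((d p.2 : ℤ) - (d p.1 : ℤ)) *
            q ^ (((d p.2 : ℤ) - d p.1) * ((d p.2 : ℤ) - d p.1 - 1) / 2 - (d p.1 : ℤ))) *
          (x p.2 * q ^ d p.2 - x p.1 * q ^ d p.1)) =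
        (∏ p ∈ Finset.univ.filter (fun p : Fin k × Fin k => p.1 < p.2),
          ((x p.2 - x p.1)⁻¹ * (-(x p.2 / x p.1)) ^ ((d p.2 : ℤ) - (d p.1 : ℤ)) *
            q ^ (((d p.2 : ℤ) - d p.1) * ((d p.2 : ℤ) - d p.1 - 1) / 2 - (d p.1 : ℤ)))) *
        ∏ p ∈ Finset.univ.filter (fun p : Fin k × Fin k => p.1 < p.2),
          (x p.2 * q ^ d p.2 - x p.1 * q ^ d p.1) := Finset.prod_mul_distrib
    rw [h, hsplit, ← mul_assoc, inv_mul_cancel₀ hWprod, one_mul]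
  set F : Fin k × Fin k → ℂ := fun p =>
    (∏' m : ℕ, (1 - (x p.1 / x p.2) * q * q ^ m)) /
      (∏' m : ℕ, (1 - (x p.1 * q ^ d p.1 / (x p.2 * q ^ d p.2)) * q * q ^ m)) with hF
  have hstep1 : (∏ b : Fin k, ∏ c : Fin k,
      (∏' m : ℕ, (1 - (x b / x c) * q * q ^ m)) /
        (∏' m : ℕ, (1 - (x b * q ^ d b / (x c * q ^ d c)) * q * q ^ m))) =
      ∏ p ∈ (Finset.univ : Finset (Fin k × Fin k)), F p := by
    rw [← Finset.univ_product_univ, Finset.prod_product]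
  rw [hstep1]
  rw [← Finset.prod_filter_mul_prod_filter_not Finset.univ
    (fun p : Fin k × Fin k => p.1 < p.2) F]
  rw [← Finset.prod_filter_mul_prod_filter_not
    (Finset.univ.filter (fun p : Fin k × Fin k => ¬ p.1 < p.2))
    (fun p : Fin k × Fin k => p.2 < p.1) F]
  -- diagonal set
  have hdiagset : ((Finset.univ.filter (fun p : Fin k × Fin k => ¬ p.1 < p.2)).filter
      (fun p : Fin k × Fin k => ¬ p.2 < p.1)) =
      Finset.univ.filter (fun p : Fin k × Fin k => p.1 = p.2) := by
    ext p
    simp only [Finset.mem_filter, Finset.mem_univ, true_and]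
    constructor
    · rintro ⟨h1, h2⟩
      exact le_antisymm (not_lt.mp h2) (not_lt.mp h1)
    · rintro h
      rw [h]
      exact ⟨lt_irrefl _, lt_irrefl _⟩
  have hdiag : ∏ p ∈ ((Finset.univ.filter (fun p : Fin k × Fin k => ¬ p.1 < p.2)).filter
      (fun p : Fin k × Fin k => ¬ p.2 < p.1)), F p = 1 := by
    rw [hdiagset]
    refine Finset.prod_eq_one fun p hp => ?_
    have hpp : p.1 = p.2 := (Finset.mem_filter.mp hp).2
    have h1 : x p.1 / x p.2 = 1 := by rw [hpp]; exact div_self (hx _)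
    have h2 : x p.1 * q ^ d p.1 / (x p.2 * q ^ d p.2) = 1 := by
      rw [hpp]; exact div_self (mul_ne_zero (hx _) (pow_ne_zero _ hq0))
    have hone : ∀ m : ℕ, 1 - (1 : ℂ) * q * q ^ m ≠ 0 := by
      intro m h
      have hn : ‖(1 : ℂ) * q * q ^ m‖ < 1 := by
        rw [one_mul, ← pow_succ', norm_pow]
        exact pow_lt_one₀ (norm_nonneg q) hq (Nat.succ_ne_zero m)
      rw [sub_eq_zero] at h
      rw [← h] at hn
      simp at hn
    rw [hF]
    simp only [h1, h2]
    exact div_self (G_ne_zero hq 1 hone)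
  rw [hdiag, mul_one]
  -- swap set
  have hswapset : ((Finset.univ.filter (fun p : Fin k × Fin k => ¬ p.1 < p.2)).filter
      (fun p : Fin k × Fin k => p.2 < p.1)) =
      Finset.univ.filter (fun p : Fin k × Fin k => p.2 < p.1) := by
    ext p
    simp only [Finset.mem_filter, Finset.mem_univ, true_and]
    exact ⟨fun h => h.2, fun h => ⟨not_lt.mpr (le_of_lt h), h⟩⟩
  rw [hswapset]
  have hswap : ∏ p ∈ Finset.univ.filter (fun p : Fin k × Fin k => p.2 < p.1), F p =
      ∏ p ∈ Finset.univ.filter (fun p : Fin k × Fin k => p.1 < p.2), F p.swap := by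
    refine Finset.prod_bij' (fun p _ => p.swap) (fun p _ => p.swap) ?_ ?_ ?_ ?_ ?_
    · intro p hp
      simp only [Finset.mem_filter, Finset.mem_univ, true_and] at hp ⊢
      exact hp
    · intro p hp
      simp only [Finset.mem_filter, Finset.mem_univ, true_and] at hp ⊢
      exact hp
    · intro p _; rfl
    · intro p _; rfl
    · intro p _; rfl
  rw [hswap, ← Finset.prod_mul_distrib]
  refine Finset.prod_congr rfl fun p hp => ?_
  have hlt : p.1 < p.2 := (Finset.mem_filter.mp hp).2
  have hne : p.1 ≠ p.2 := ne_of_lt hlt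
  have := pairlem q hq0 hq (x p.1) (x p.2) (hx p.1) (hx p.2)
    (hrat p.2 p.1 (Ne.symm hne)) (hrat p.1 p.2 hne) (d p.1) (d p.2)
  rw [hF]
  exact this
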